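/- Let γ ∈ [0,1), C > 0, θ ∈ (0,1), and suppose nonnegative reals a = ⟨x₀⟩ + ⟨y₀⟩ ≥ 2 and b, c ≥ 0 satisfy ((ν-1)/ν)·θ·a + b + c ≤ C(1 + a^γ) for some ν > 1. Then θ·a + b + c ≤ C'·θ^(-γ/(1-γ)) for a constant C' depending only on C, γ, ν. -/

import Mathlib

/-- Young-type inequality: for `0 ≤ γ < 1`, `0 ≤ a`, `0 < t`,
`a ^ γ ≤ γ * (t * a) + (1 - γ) * t ^ (-(γ / (1 - γ)))`. -/
lemma young_aux (γ a t : ℝ) (hγ0 : 0 ≤ γ) (hγ1 : γ < 1) (ha : 0 ≤ a) (ht : 0 < t) :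
    a ^ γ ≤ γ * (t * a) + (1 - γ) * t ^ (-(γ / (1 - γ))) := by
  have h1γ : (0:ℝ) < 1 - γ := by linarith
  have key := Real.geom_mean_le_arith_mean2_weighted hγ0 (le_of_lt h1γ)
    (mul_nonneg ht.le ha) (Real.rpow_nonneg ht.le (-(γ / (1 - γ)))) (by ring)
  have heq : (t * a) ^ γ * (t ^ (-(γ / (1 - γ)))) ^ (1 - γ) = a ^ γ := by
    rw [← Real.rpow_mul ht.le]
    have h2 : -(γ / (1 - γ)) * (1 - γ) = -γ := by field_simp
    rw [h2, Real.mul_rpow ht.le ha, mul_comm (t ^ γ) (a ^ γ), mul_assoc,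
      ← Real.rpow_add ht]
    simp
  linarith [heq ▸ key]

theorem apriori_theta_estimate (γ C ν : ℝ) (hγ0 : 0 ≤ γ) (hγ1 : γ < 1)
    (hC : 0 < C) (hν : 1 < ν) :
    ∃ C' : ℝ, 0 < C' ∧ ∀ θ a b c : ℝ, 0 < θ → θ < 1 → 2 ≤ a → 0 ≤ b → 0 ≤ c →
      ((ν - 1) / ν) * θ * a + b + c ≤ C * (1 + a ^ γ) →
      θ * a + b + c ≤ C' * θ ^ (-(γ / (1 - γ))) := by
  set κ : ℝ := (ν - 1) / ν with hκdef
  have hκ0 : 0 < κ := div_pos (by linarith) (by linarith)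
  have hκ1 : κ < 1 := by
    rw [hκdef, div_lt_one (by linarith)]; linarith
  set β : ℝ := γ / (1 - γ) with hβdef
  set K : ℝ := 2 * C * (κ / (4 * C)) ^ (-β) with hKdef
  have hr : 0 < κ / (4 * C) := div_pos hκ0 (by linarith)
  have hK : 0 < K := by
    apply mul_pos (by linarith)
    exact Real.rpow_pos_of_pos hr _
  refine ⟨2 * K / κ, div_pos (by linarith) hκ0, ?_⟩
  intro θ a b c hθ0 hθ1 ha hb hc hyp
  have ha0 : (0:ℝ) ≤ a := by linarith
  have haγ : 1 ≤ a ^ γ := Real.one_le_rpow (by linarith) hγ0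
  set t : ℝ := κ / (4 * C) * θ with htdef
  have ht : 0 < t := mul_pos hr hθ0
  have hyoung := young_aux γ a t hγ0 hγ1 ha0 ht
  have hta : 0 ≤ t * a := mul_nonneg ht.le ha0
  have htβ : 0 ≤ t ^ (-β) := Real.rpow_nonneg ht.le _
  have hy2 : a ^ γ ≤ t * a + t ^ (-β) := by
    have h1 : γ * (t * a) ≤ 1 * (t * a) := mul_le_mul_of_nonneg_right (by linarith) hta
    have h2 : (1 - γ) * t ^ (-β) ≤ 1 * t ^ (-β) := mul_le_mul_of_nonneg_right (by linarith) htβ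
    calc a ^ γ ≤ γ * (t * a) + (1 - γ) * t ^ (-β) := hyoung
      _ ≤ t * a + t ^ (-β) := by linarith
  have hmul : t ^ (-β) = (κ / (4 * C)) ^ (-β) * θ ^ (-β) := by
    rw [htdef, Real.mul_rpow hr.le hθ0.le]
  -- from hypothesis: κ θ a + b + c ≤ 2 C a^γ
  have h2C : κ * θ * a + b + c ≤ 2 * C * a ^ γ := by
    have : C * (1 + a ^ γ) ≤ 2 * C * a ^ γ := by nlinarith
    linarith
  have h3 : κ * θ * a + b + c ≤ 2 * C * (t * a) + K * θ ^ (-β) := by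
    have := mul_le_mul_of_nonneg_left hy2 (by linarith : (0:ℝ) ≤ 2 * C)
    rw [mul_add, hmul] at this
    calc κ * θ * a + b + c ≤ 2 * C * a ^ γ := h2C
      _ ≤ 2 * C * (t * a) + K * θ ^ (-β) := by rw [hKdef]; linarith [this]
  have hCt : 2 * C * (t * a) = κ * θ * a / 2 := by
    rw [htdef]; field_simp; ring
  have h4 : κ * θ * a / 2 + b + c ≤ K * θ ^ (-β) := by
    rw [hCt] at h3; linarith
  -- multiply by 2/κ
  have hθa : 0 ≤ θ * a := mul_nonneg hθ0.le ha0
  have hfinal : θ * a + b + c ≤ (2 / κ) * (κ * θ * a / 2 + b + c) := by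
    have h2κ : 1 ≤ 2 / κ := by
      rw [le_div_iff₀ hκ0]; linarith
    have : (2 / κ) * (κ * θ * a / 2) = θ * a := by field_simp
    nlinarith [mul_le_mul_of_nonneg_right h2κ hb, mul_le_mul_of_nonneg_right h2κ hc]
  calc θ * a + b + c ≤ (2 / κ) * (κ * θ * a / 2 + b + c) := hfinal
    _ ≤ (2 / κ) * (K * θ ^ (-β)) := by
        apply mul_le_mul_of_nonneg_left h4 (by positivity)
    _ = 2 * K / κ * θ ^ (-β) := by ring
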